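/- Let X ⊂ E and Y ⊂ F be standard Bessel sequences in Hilbert C*-modules over a unital C*-algebra A. If U is a compact operator on ℓ²(A) (i.e., U ∈ K(ℓ²(A)), the norm-closure of finite rank 'compact' module operators), then the generalized Bessel multiplier M_{U,Y,X} = T_Y* U T_X is a compact operator in K(E,F). -/

import Mathlib

open scoped RightActions

/-- The Hilbert C⋆-module class as it stood in the older Mathlib (right `Aᵐᵒᵖ`-action,
`⟪x, y <• a⟫ = ⟪x, y⟫ * a`); Mathlib's `CStarModule` now uses a left action. -/
class CStarModuleRight (A : outParam Type*) (E : Type*) [NonUnitalSemiring A] [StarRing A] [Module ℂ A]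
    [AddCommGroup E] [Module ℂ E] [PartialOrder A] [SMul Aᵐᵒᵖ E] [Norm A] [Norm E]
    extends Inner A E where
  inner_add_right {x} {y} {z} : inner x (y + z) = inner x y + inner x z
  inner_self_nonneg {x} : 0 ≤ inner x x
  inner_self {x} : inner x x = 0 ↔ x = 0
  inner_op_smul_right {a : A} {x y : E} : inner x (y <• a) = inner x y * a
  inner_smul_right_complex {z : ℂ} {x} {y} : inner x (z • y) = z • inner x y
  star_inner x y : star (inner x y) = inner y x
  norm_eq_sqrt_norm_inner_self x : ‖x‖ = √‖inner x x‖

/-- Two maps between Hilbert C*-modules form an adjoint pair: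
`⟪T x, y⟫ = ⟪x, S y⟫` for all `x, y`. -/
def IsAdjointPairCM (A : Type*) [CStarAlgebra A] [PartialOrder A] [StarOrderedRing A]
    {E F : Type*} [NormedAddCommGroup E] [NormedSpace ℂ E] [SMul Aᵐᵒᵖ E] [CStarModuleRight A E]
    [NormedAddCommGroup F] [NormedSpace ℂ F] [SMul Aᵐᵒᵖ F] [CStarModuleRight A F]
    (T : E → F) (S : F → E) : Prop :=
  ∀ (x : E) (y : F), (inner A (T x) y) = inner A x (S y)

section Defs
variable {A : Type*} [CStarAlgebra A] [PartialOrder A] [StarOrderedRing A]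
variable {E L : Type*} [NormedAddCommGroup E] [NormedSpace ℂ E] [SMul Aᵐᵒᵖ E] [CStarModuleRight A E]
  [NormedAddCommGroup L] [NormedSpace ℂ L] [SMul Aᵐᵒᵖ L] [CStarModuleRight A L]

/-- `x` is a standard Bessel sequence with Bessel bound `D`:
`∑ₙ ⟪v, xₙ⟫⟪xₙ, v⟫` is norm-convergent and bounded by `D ⟪v, v⟫`. -/
def IsBesselSeq (x : ℕ → E) (D : ℝ) : Prop :=
  ∀ v : E, Summable (fun n => (inner A v (x n)) * inner A (x n) v) ∧
    (∑' n, (inner A v (x n)) * inner A (x n) v) ≤ D • (inner A v v)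

/-- `x` is a standard frame with frame bounds `C`, `D`. -/
def IsFrameSeq (x : ℕ → E) (C D : ℝ) : Prop :=
  IsBesselSeq x D ∧
    ∀ v : E, C • (inner A v v) ≤ ∑' n, (inner A v (x n)) * inner A (x n) v

/-- `e` is the standard orthonormal basis of (a copy of) `ℓ²(A)`:
orthonormality together with the reconstruction `v = ∑ₙ eₙ • ⟪eₙ, v⟫`. -/
def IsStdBasis (e : ℕ → L) : Prop :=
  (∀ m n : ℕ, (inner A (e m) (e n)) = if m = n then 1 else 0) ∧
    ∀ v : L, HasSum (fun n => e n <• (inner A (e n) v)) v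

/-- `T` is the analysis operator of the sequence `x`, relative to the standard
basis `e` of `ℓ²(A)`: the `n`-th coefficient of `T v` is `⟪xₙ, v⟫`. -/
def IsAnalysisOp (e : ℕ → L) (x : ℕ → E) (T : E → L) : Prop :=
  ∀ (v : E) (n : ℕ), (inner A (e n) (T v)) = inner A (x n) v

/-- `S` is the synthesis operator of the sequence `x`: `S a = ∑ₙ xₙ • aₙ`. -/
def IsSynthesisOp (e : ℕ → L) (x : ℕ → E) (S : L → E) : Prop :=
  ∀ a : L, HasSum (fun n => x n <• (inner A (e n) a)) (S a)

/-- `x` is a modular Riesz basis: the image of the standard basis `e` of `ℓ²(A)`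
under an adjointable invertible operator. -/
def IsModularRieszBasis (e : ℕ → L) (x : ℕ → E) : Prop :=
  ∃ (V : L →L[ℂ] E) (Vinv : E →L[ℂ] L) (Vstar : E →L[ℂ] L),
    Function.LeftInverse Vinv V ∧ Function.RightInverse Vinv V ∧
      IsAdjointPairCM A V Vstar ∧ ∀ n, V (e n) = x n

end Defs

variable {A : Type*} [CStarAlgebra A] [PartialOrder A] [StarOrderedRing A]
variable {E F L : Type*}
  [NormedAddCommGroup E] [NormedSpace ℂ E] [SMul Aᵐᵒᵖ E] [CStarModuleRight A E]
  [NormedAddCommGroup F] [NormedSpace ℂ F] [SMul Aᵐᵒᵖ F] [CStarModuleRight A F]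
  [NormedAddCommGroup L] [NormedSpace ℂ L] [SMul Aᵐᵒᵖ L] [CStarModuleRight A L]

/-- The elementary ("rank one") operators `Θ_{x,y} : z ↦ y • ⟪x, z⟫`. -/
def elementaryOps : Set (E →L[ℂ] F) :=
  {T | ∃ (x : E) (y : F), ∀ z : E, T z = y <• (inner A x z)}

section Aux

variable {G : Type*} [NormedAddCommGroup G] [NormedSpace ℂ G] [SMul Aᵐᵒᵖ G] [CStarModuleRight A G]

namespace CSR

lemma inner_add_right {x y z : G} : inner A x (y + z) = inner A x y + inner A x z :=
  CStarModuleRight.inner_add_right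
lemma inner_self {x : G} : inner A x x = 0 ↔ x = 0 := CStarModuleRight.inner_self
lemma inner_op_smul_right {a : A} {x y : G} : inner A x (y <• a) = inner A x y * a :=
  CStarModuleRight.inner_op_smul_right
lemma inner_smul_right_complex {z : ℂ} {x y : G} : inner A x (z • y) = z • inner A x y :=
  CStarModuleRight.inner_smul_right_complex
lemma star_inner (x y : G) : star (inner A x y) = inner A y x := CStarModuleRight.star_inner x y
lemma norm_eq_sqrt_norm_inner_self (x : G) : ‖x‖ = √‖inner A x x‖ :=
  CStarModuleRight.norm_eq_sqrt_norm_inner_self x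

lemma inner_add_left {x y z : G} : inner A (x + y) z = inner A x z + inner A y z := by
  rw [← CSR.star_inner z (x + y), CSR.inner_add_right, star_add, CSR.star_inner, CSR.star_inner]
lemma inner_op_smul_left {a : A} {x y : G} : inner A (x <• a) y = star a * inner A x y := by
  rw [← CSR.star_inner y, CSR.inner_op_smul_right, star_mul, CSR.star_inner]
lemma inner_smul_left_complex {z : ℂ} {x y : G} : inner A (z • x) y = star z • inner A x y := by
  rw [← CSR.star_inner y, CSR.inner_smul_right_complex, star_smul, CSR.star_inner]

lemma inner_smul_left_real {r : ℝ} {x y : G} : inner A (r • x) y = r • inner A x y := by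
  have h₁ : r • x = (r : ℂ) • x := by simp
  rw [h₁, CSR.inner_smul_left_complex]
  simp
lemma inner_smul_right_real {r : ℝ} {x y : G} : inner A x (r • y) = r • inner A x y := by
  have h₁ : r • y = (r : ℂ) • y := by simp
  rw [h₁, CSR.inner_smul_right_complex]
  simp

noncomputable def innerSesq : G →ₗ⋆[ℂ] G →ₗ[ℂ] A where
  toFun x := { toFun := fun y => inner A x y
               map_add' := fun z y => CSR.inner_add_right
               map_smul' := fun z y => CSR.inner_smul_right_complex }
  map_add' z y := by ext w; exact CSR.inner_add_left
  map_smul' z y := by ext w; exact CSR.inner_smul_left_complex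

lemma inner_zero_right {x : G} : inner A x 0 = 0 := map_zero (innerSesq (A := A) x)
lemma inner_sub_right {x y z : G} : inner A x (y - z) = inner A x y - inner A x z :=
  map_sub (innerSesq (A := A) x) y z
lemma inner_sub_left {x y z : G} : inner A (x - y) z = inner A x z - inner A y z := by
  rw [← CSR.star_inner z, CSR.inner_sub_right, star_sub, CSR.star_inner, CSR.star_inner]
lemma inner_sum_right {ι : Type*} {s : Finset ι} {x : G} {y : ι → G} :
    inner A x (∑ i ∈ s, y i) = ∑ i ∈ s, inner A x (y i) :=
  map_sum (innerSesq (A := A) x) y s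
lemma inner_sum_left {ι : Type*} {s : Finset ι} {x : ι → G} {y : G} :
    inner A (∑ i ∈ s, x i) y = ∑ i ∈ s, inner A (x i) y := by
  rw [← CSR.star_inner y, CSR.inner_sum_right, star_sum]
  simp only [CSR.star_inner]

lemma norm_sq_eq {x : G} : ‖x‖ ^ 2 = ‖inner A x x‖ := by
  rw [CSR.norm_eq_sqrt_norm_inner_self (A := A) x, Real.sq_sqrt (norm_nonneg _)]

lemma inner_mul_inner_swap_le {x y : G} :
    inner A y x * inner A x y ≤ ‖x‖ ^ 2 • inner A y y := by
  rcases eq_or_ne x 0 with h | h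
  · rw [h, CSR.inner_zero_right, zero_mul, norm_zero]
    simp
  · have h₁ : ∀ (a : A),
        (0 : A) ≤ ‖x‖ ^ 2 • (star a * a) - ‖x‖ ^ 2 • (star a * inner A x y)
                  - ‖x‖ ^ 2 • (inner A y x * a) + ‖x‖ ^ 2 • (‖x‖ ^ 2 • inner A y y) := fun a => by
      calc (0 : A) ≤ inner A (x <• a - ‖x‖ ^ 2 • y) (x <• a - ‖x‖ ^ 2 • y) := by
                      exact CStarModuleRight.inner_self_nonneg
            _ = star a * inner A x x * a - ‖x‖ ^ 2 • (star a * inner A x y)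
                  - ‖x‖ ^ 2 • (inner A y x * a) + ‖x‖ ^ 2 • (‖x‖ ^ 2 • inner A y y) := by
                      simp only [CSR.inner_sub_right, CSR.inner_op_smul_right, CSR.inner_sub_left,
                        CSR.inner_op_smul_left, CSR.inner_smul_left_real,
                        CSR.inner_smul_right_real, smul_sub, sub_mul, smul_mul_assoc, mul_assoc]
                      abel
            _ ≤ ‖x‖ ^ 2 • (star a * a) - ‖x‖ ^ 2 • (star a * inner A x y)
                  - ‖x‖ ^ 2 • (inner A y x * a) + ‖x‖ ^ 2 • (‖x‖ ^ 2 • inner A y y) := by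
                      gcongr
                      calc _ ≤ ‖inner A x x‖ • (star a * a) :=
                          CStarAlgebra.star_left_conjugate_le_norm_smul (CSR.star_inner x x)
                        _ = ‖x‖ ^ 2 • (star a * a) := by rw [CSR.norm_sq_eq (x := x)]
    specialize h₁ (inner A x y)
    simp only [CSR.star_inner, sub_self, zero_sub, le_neg_add_iff_add_le, add_zero] at h₁
    rwa [smul_le_smul_iff_of_pos_left (pow_pos (norm_pos_iff.mpr h) _)] at h₁

variable (G) in
lemma norm_inner_le {x y : G} : ‖inner A x y‖ ≤ ‖x‖ * ‖y‖ := by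
  have := calc ‖inner A x y‖ ^ 2 = ‖inner A y x * inner A x y‖ := by
                rw [← CSR.star_inner x y, CStarRing.norm_star_mul_self, pow_two]
    _ ≤ ‖‖x‖ ^ 2 • inner A y y‖ := by
                refine CStarAlgebra.norm_le_norm_of_nonneg_of_le ?_ CSR.inner_mul_inner_swap_le
                rw [← CSR.star_inner x y]
                exact star_mul_self_nonneg (inner A x y)
    _ = ‖x‖ ^ 2 * ‖inner A y y‖ := by simp [norm_smul]
    _ = ‖x‖ ^ 2 * ‖y‖ ^ 2 := by rw [CSR.norm_sq_eq (x := y)]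
    _ = (‖x‖ * ‖y‖) ^ 2 := by rw [mul_pow]
  exact (pow_le_pow_iff_left₀ (norm_nonneg _) (by positivity) (by norm_num)).mp this

end CSR

lemma myExtInner {u u' : G} (h : ∀ w : G, (inner A w u) = inner A w u') : u = u' := by
  have h0 : (inner A (u - u') (u - u')) = 0 := by
    rw [CSR.inner_sub_right, h (u - u'), sub_self]
  exact sub_eq_zero.mp (CSR.inner_self.mp h0)

lemma my_op_smul_mul (w : G) (c d : A) : (w <• c) <• d = w <• (c * d) :=
  myExtInner fun u => by
    simp only [CSR.inner_op_smul_right, mul_assoc]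

lemma my_op_smul_add (w : G) (c d : A) : w <• (c + d) = w <• c + w <• d :=
  myExtInner fun u => by
    simp only [CSR.inner_op_smul_right, CSR.inner_add_right, mul_add]

lemma my_op_smul_sub (w : G) (c d : A) : w <• (c - d) = w <• c - w <• d :=
  myExtInner fun u => by
    simp only [CSR.inner_op_smul_right, CSR.inner_sub_right, mul_sub]

lemma my_smul_op_smul (r : ℂ) (w : G) (c : A) : w <• (r • c) = r • (w <• c) :=
  myExtInner fun u => by
    simp only [CSR.inner_op_smul_right, CSR.inner_smul_right_complex,
      mul_smul_comm]

lemma my_op_smul_sum {ι : Type*} (s : Finset ι) (w : G) (c : ι → A) :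
    w <• (∑ i ∈ s, c i) = ∑ i ∈ s, w <• c i :=
  myExtInner fun u => by
    simp only [CSR.inner_op_smul_right, CSR.inner_sum_right, Finset.mul_sum]

lemma my_norm_op_smul_le (w : G) (c : A) : ‖w <• c‖ ≤ ‖w‖ * ‖c‖ := by
  rw [CSR.norm_eq_sqrt_norm_inner_self]
  have h1 : (inner A (w <• c) (w <• c)) = star c * ((inner A w w) * c) := by
    simp [CSR.inner_op_smul_right, CSR.inner_op_smul_left, mul_assoc]
  have h2 : ‖(inner A (w <• c) (w <• c))‖ ≤ (‖w‖ * ‖c‖) ^ 2 := by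
    rw [h1]
    calc ‖star c * ((inner A w w) * c)‖ ≤ ‖star c‖ * ‖(inner A w w) * c‖ :=
          norm_mul_le _ _
      _ ≤ ‖c‖ * (‖(inner A w w)‖ * ‖c‖) := by
          rw [norm_star]; gcongr; exact norm_mul_le _ _
      _ = ‖c‖ * (‖w‖ ^ 2 * ‖c‖) := by rw [← CSR.norm_sq_eq]
      _ = (‖w‖ * ‖c‖) ^ 2 := by ring
  calc √‖(inner A (w <• c) (w <• c))‖ ≤ √((‖w‖ * ‖c‖) ^ 2) := Real.sqrt_le_sqrt h2
    _ = ‖w‖ * ‖c‖ := Real.sqrt_sq (by positivity)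

end Aux

/-- The elementary operator `Θ_{x₀,y₀}` as a bundled continuous linear map. -/
noncomputable def elemOp (x0 : E) (y0 : F) : E →L[ℂ] F :=
  LinearMap.mkContinuous
    { toFun := fun z => y0 <• (inner A x0 z)
      map_add' := fun z z' => by
        rw [CSR.inner_add_right, my_op_smul_add]
      map_smul' := fun r z => by
        rw [CSR.inner_smul_right_complex, my_smul_op_smul]
        rfl }
    (‖y0‖ * ‖x0‖)
    fun z => by
      calc ‖y0 <• (inner A x0 z)‖ ≤ ‖y0‖ * ‖(inner A x0 z)‖ := my_norm_op_smul_le _ _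
        _ ≤ ‖y0‖ * (‖x0‖ * ‖z‖) := by gcongr; exact CSR.norm_inner_le E
        _ = ‖y0‖ * ‖x0‖ * ‖z‖ := (mul_assoc _ _ _).symm

@[simp] lemma elemOp_apply (x0 : E) (y0 : F) (z : E) :
    elemOp (A := A) x0 y0 z = y0 <• (inner A x0 z) := rfl

/-- If `U` is a compact operator on `ℓ²(A)`, then the generalized Bessel multiplier
`M_{U,Y,X} = T_Y* U T_X` is compact, i.e. lies in `K(E,F)`, the closed linear span of
the elementary operators. -/
theorem generalizedMultiplier_compact
    (e : ℕ → L) (he : IsStdBasis e)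
    (x : ℕ → E) (y : ℕ → F) (D D' : ℝ)
    (hX : IsBesselSeq x D) (hY : IsBesselSeq y D')
    (TX : E →L[ℂ] L) (TY : F →L[ℂ] L) (SY : L →L[ℂ] F)
    (hTX : IsAnalysisOp e x TX) (hTY : IsAnalysisOp e y TY)
    (hSY : IsAdjointPairCM A TY SY)
    (U : L →L[ℂ] L)
    (hU : U ∈ closure (Submodule.span ℂ (elementaryOps (A := A) (E := L) (F := L)) :
      Set (L →L[ℂ] L)))
    (M : E →L[ℂ] F) (hM : ∀ v : E, M v = SY (U (TX v))) :
    M ∈ closure (Submodule.span ℂ (elementaryOps (A := A) (E := E) (F := F)) :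
      Set (E →L[ℂ] F)) := by
  classical
  -- SY is `A`-module linear, being the adjoint of TY
  have hSYmod : ∀ (w : L) (c : A), SY (w <• c) = SY w <• c := fun w c =>
    myExtInner fun u => by
      rw [← hSY u (w <• c), CSR.inner_op_smul_right, hSY u w,
        CSR.inner_op_smul_right]
  set Ktgt : Set (E →L[ℂ] F) :=
    (closure (Submodule.span ℂ (elementaryOps (A := A) (E := E) (F := F)) :
      Set (E →L[ℂ] F))) with hKtgt
  -- key step: the image of an elementary operator lies in the closed span
  have key : ∀ T ∈ elementaryOps (A := A) (E := L) (F := L), SY.comp (T.comp TX) ∈ Ktgt := by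
    rintro T ⟨a, b, hT⟩
    have hsum : HasSum (fun n => e n <• (inner A (e n) a)) a := he.2 a
    set Θ : ℕ → (E →L[ℂ] F) := fun n => elemOp (A := A) (x n) (SY b <• (inner A a (e n)))
      with hΘ
    have hmem : ∀ s : Finset ℕ, (∑ n ∈ s, Θ n) ∈
        Submodule.span ℂ (elementaryOps (A := A) (E := E) (F := F)) := fun s =>
      Submodule.sum_mem _ fun n _ => Submodule.subset_span
        ⟨x n, SY b <• (inner A a (e n)), fun z => rfl⟩
    have hPsum : ∀ (s : Finset ℕ) (v : E),
        (∑ n ∈ s, Θ n) v =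
          SY (b <• (inner A (∑ n ∈ s, e n <• (inner A (e n) a)) (TX v))) := by
      intro s v
      rw [ContinuousLinearMap.sum_apply, hSYmod, CSR.inner_sum_left, my_op_smul_sum]
      refine Finset.sum_congr rfl fun n _ => ?_
      rw [hΘ, elemOp_apply, my_op_smul_mul, CSR.inner_op_smul_left,
        CSR.star_inner, hTX v n]
    have hval : ∀ (s : Finset ℕ) (v : E),
        (SY.comp (T.comp TX) - ∑ n ∈ s, Θ n) v =
          SY (b <• (inner A (a - ∑ n ∈ s, e n <• (inner A (e n) a)) (TX v))) := by
      intro s v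
      rw [ContinuousLinearMap.sub_apply, ContinuousLinearMap.comp_apply,
        ContinuousLinearMap.comp_apply, hT, hPsum, ← map_sub, ← my_op_smul_sub,
        ← CSR.inner_sub_left]
    have hbound : ∀ s : Finset ℕ,
        ‖SY.comp (T.comp TX) - ∑ n ∈ s, Θ n‖ ≤
          ‖SY‖ * ‖b‖ * ‖TX‖ * ‖a - ∑ n ∈ s, e n <• (inner A (e n) a)‖ := by
      intro s
      refine ContinuousLinearMap.opNorm_le_bound _ (by positivity) fun v => ?_
      rw [hval s v]
      set P := ∑ n ∈ s, e n <• (inner A (e n) a)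
      calc ‖SY (b <• (inner A (a - P) (TX v)))‖
          ≤ ‖SY‖ * ‖b <• (inner A (a - P) (TX v))‖ := SY.le_opNorm _
        _ ≤ ‖SY‖ * (‖b‖ * ‖(inner A (a - P) (TX v))‖) := by
            gcongr; exact my_norm_op_smul_le _ _
        _ ≤ ‖SY‖ * (‖b‖ * (‖a - P‖ * ‖TX v‖)) := by
            gcongr; exact CSR.norm_inner_le L
        _ ≤ ‖SY‖ * (‖b‖ * (‖a - P‖ * (‖TX‖ * ‖v‖))) := by
            gcongr; exact TX.le_opNorm v
        _ = ‖SY‖ * ‖b‖ * ‖TX‖ * ‖a - P‖ * ‖v‖ := by ring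
    have hnorm0 : Filter.Tendsto
        (fun s : Finset ℕ => ‖a - ∑ n ∈ s, e n <• (inner A (e n) a)‖)
        Filter.atTop (nhds 0) := by
      have h1 := tendsto_iff_norm_sub_tendsto_zero.mp hsum
      simpa [norm_sub_rev] using h1
    have htend : Filter.Tendsto (fun s : Finset ℕ => ∑ n ∈ s, Θ n) Filter.atTop
        (nhds (SY.comp (T.comp TX))) := by
      rw [tendsto_iff_norm_sub_tendsto_zero]
      have hb : ∀ s : Finset ℕ, ‖(∑ n ∈ s, Θ n) - SY.comp (T.comp TX)‖ ≤
          ‖SY‖ * ‖b‖ * ‖TX‖ * ‖a - ∑ n ∈ s, e n <• (inner A (e n) a)‖ := fun s => by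
        rw [norm_sub_rev]; exact hbound s
      have hc : Filter.Tendsto
          (fun s : Finset ℕ =>
            ‖SY‖ * ‖b‖ * ‖TX‖ * ‖a - ∑ n ∈ s, e n <• (inner A (e n) a)‖)
          Filter.atTop (nhds 0) := by
        simpa using hnorm0.const_mul (‖SY‖ * ‖b‖ * ‖TX‖)
      exact squeeze_zero (fun s => norm_nonneg _) hb hc
    exact mem_closure_of_tendsto htend (Filter.Eventually.of_forall fun s => hmem s)
  -- the closed span, as a submodule
  have hKsub : Ktgt = (Submodule.topologicalClosure
      (Submodule.span ℂ (elementaryOps (A := A) (E := E) (F := F))) : Set (E →L[ℂ] F)) :=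
    (Submodule.topologicalClosure_coe _).symm
  -- the map V ↦ SY ∘ V ∘ TX sends the span into the closed span
  have hspan : ∀ V ∈ Submodule.span ℂ (elementaryOps (A := A) (E := L) (F := L)),
      SY.comp (V.comp TX) ∈ Ktgt := by
    intro V hV
    induction hV using Submodule.span_induction with
    | mem T hT => exact key T hT
    | zero =>
        have h0 : SY.comp ((0 : L →L[ℂ] L).comp TX) = 0 := by ext v; simp
        rw [h0]
        exact subset_closure (Submodule.zero_mem _)
    | add V W _ _ ihV ihW =>
        have hadd : SY.comp ((V + W).comp TX) = SY.comp (V.comp TX) + SY.comp (W.comp TX) := by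
          ext v; simp
        rw [hadd, hKsub] at *
        exact Submodule.add_mem _ ihV ihW
    | smul c V _ ih =>
        have hsmul : SY.comp ((c • V).comp TX) = c • SY.comp (V.comp TX) := by
          ext v; simp
        rw [hsmul, hKsub] at *
        exact Submodule.smul_mem _ c ih
  -- the map V ↦ SY ∘ V ∘ TX is continuous
  have hf_cont : Continuous fun V : L →L[ℂ] L => SY.comp (V.comp TX) := by
    have hlip : LipschitzWith (‖SY‖₊ * ‖TX‖₊) (fun V : L →L[ℂ] L => SY.comp (V.comp TX)) := by
      apply LipschitzWith.of_dist_le_mul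
      intro V W
      rw [dist_eq_norm, dist_eq_norm]
      have hdiff : SY.comp (V.comp TX) - SY.comp (W.comp TX) = SY.comp ((V - W).comp TX) := by
        ext v; simp
      rw [hdiff]
      calc ‖SY.comp ((V - W).comp TX)‖ ≤ ‖SY‖ * ‖(V - W).comp TX‖ :=
            ContinuousLinearMap.opNorm_comp_le _ _
        _ ≤ ‖SY‖ * (‖V - W‖ * ‖TX‖) := by
            gcongr; exact ContinuousLinearMap.opNorm_comp_le _ _
        _ = (‖SY‖₊ * ‖TX‖₊ : NNReal) * ‖V - W‖ := by push_cast; ring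
    exact hlip.continuous
  have hMU : M = SY.comp (U.comp TX) := by ext v; rw [hM v]; rfl
  rw [hMU]
  have himg : SY.comp (U.comp TX) ∈ closure ((fun V : L →L[ℂ] L => SY.comp (V.comp TX)) ''
      (Submodule.span ℂ (elementaryOps (A := A) (E := L) (F := L)) : Set (L →L[ℂ] L))) :=
    image_closure_subset_closure_image hf_cont ⟨U, hU, rfl⟩
  exact closure_minimal (by rintro _ ⟨V, hV, rfl⟩; exact hspan V hV) isClosed_closure himg
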